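/- Let W be a group, η a character of W, and φ a semisimple complex representation of W of dimension 2n all of whose irreducible summands have dimension at most 2. If φ carries a nondegenerate η-twisted symplectic form, then φ decomposes as a direct sum ⊕_{i=1}^{a} φ_i ⊕ ⊕_{j=a+1}^{b} (φ_j ⊕ φ_j^∨ ⊗ η), where each φ_i (1 ≤ i ≤ a) is a 2-dimensional irreducible representation carrying a nondegenerate η-twisted symplectic form, and each φ_j (a+1 ≤ j ≤ b) is irreducible and carries no such form. -/

import Mathlib

/-- An `η`-twisted symplectic form on the invariant subspace `p` of a representation `φ`:
a bilinear form on `V` which, restricted to `p`, is alternating, nondegenerate, and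
`η`-twisted equivariant. -/
def HasTwistedSymplecticFormOn {W : Type*} [Group W] {V : Type*} [AddCommGroup V]
    [Module ℂ V] (φ : Representation ℂ W V) (η : W →* ℂˣ) (p : Submodule ℂ V) : Prop :=
  ∃ B : V →ₗ[ℂ] V →ₗ[ℂ] ℂ,
    (∀ v ∈ p, B v v = 0) ∧
    (∀ v ∈ p, (∀ u ∈ p, B v u = 0) → v = 0) ∧
    (∀ w : W, ∀ u ∈ p, ∀ v ∈ p, B (φ w u) (φ w v) = (η w : ℂ) * B u v)


set_option linter.unusedSectionVars false
set_option linter.unusedVariables false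
set_option maxHeartbeats 1000000

open Module Submodule LinearMap Function


section Aux

variable {V : Type*} [AddCommGroup V] [Module ℂ V]

lemma bskew (B : V →ₗ[ℂ] V →ₗ[ℂ] ℂ) (halt : ∀ v, B v v = 0) (u v : V) :
    B u v = - B v u := by
  have h := halt (u + v)
  simp only [map_add, LinearMap.add_apply, halt u, halt v] at h
  linear_combination h

/-- the right-orthogonal complement of `M` inside `N` -/
noncomputable def perp (B : V →ₗ[ℂ] V →ₗ[ℂ] ℂ) (M N : Submodule ℂ V) : Submodule ℂ V :=
  N ⊓ ⨅ u : M, LinearMap.ker (B u)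

lemma mem_perp {B : V →ₗ[ℂ] V →ₗ[ℂ] ℂ} {M N : Submodule ℂ V} {v : V} :
    v ∈ perp B M N ↔ v ∈ N ∧ ∀ u ∈ M, B u v = 0 := by
  simp [perp, Submodule.mem_iInf, Subtype.forall]

noncomputable def pairMap (B : V →ₗ[ℂ] V →ₗ[ℂ] ℂ) (A X : Submodule ℂ V) :
    X →ₗ[ℂ] Module.Dual ℂ A :=
  (B.domRestrict A).flip.comp X.subtype

@[simp] lemma pairMap_apply {B : V →ₗ[ℂ] V →ₗ[ℂ] ℂ} {A X : Submodule ℂ V}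
    (x : X) (a : A) : pairMap B A X x a = B a x := rfl

lemma pairMap_inj {B : V →ₗ[ℂ] V →ₗ[ℂ] ℂ} {A X : Submodule ℂ V}
    (hK : ∀ x ∈ X, (∀ a ∈ A, B a x = 0) → x = 0) :
    Function.Injective (pairMap B A X) := by
  rw [← LinearMap.ker_eq_bot, eq_bot_iff]
  intro x hx
  have : (x : V) = 0 := hK x x.2 fun a ha => by
    have := congrFun (congrArg DFunLike.coe (LinearMap.mem_ker.mp hx)) ⟨a, ha⟩
    simpa using this
  simpa [Submodule.mem_bot] using Subtype.ext this

variable [FiniteDimensional ℂ V]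

lemma pairMap_rank {B : V →ₗ[ℂ] V →ₗ[ℂ] ℂ} {A X : Submodule ℂ V}
    (hK : ∀ x ∈ X, (∀ a ∈ A, B a x = 0) → x = 0) :
    finrank ℂ X ≤ finrank ℂ A := by
  have := LinearMap.finrank_le_finrank_of_injective (pairMap_inj hK)
  rwa [Subspace.dual_finrank_eq] at this

lemma master_disjoint {A Y Z M N : Submodule ℂ V}
    (hAN : A ≤ N) (hYN : Y ≤ N) (hZM : Z ≤ M) (hMN : Disjoint M N) (hAY : Disjoint A Y) :
    Disjoint A (Y ⊔ Z) := by
  rw [Submodule.disjoint_def]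
  intro v hvA hvYZ
  obtain ⟨y, hy, z, hz, rfl⟩ := Submodule.mem_sup.mp hvYZ
  have hzN : z ∈ N := by
    have : z = (y + z) - y := by abel
    rw [this]
    exact Submodule.sub_mem N (hAN hvA) (hYN hy)
  have hz0 : z = 0 := Submodule.disjoint_def.mp hMN z (hZM hz) hzN
  rw [hz0, add_zero] at hvA ⊢
  exact Submodule.disjoint_def.mp hAY y hvA hy

lemma iSup_fin_cons {α : Type*} [CompleteLattice α] {a : ℕ} (U : α) (P : Fin a → α) :
    ⨆ i : Fin (a + 1), Fin.cons U P i = U ⊔ ⨆ i, P i := by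
  apply le_antisymm
  · exact iSup_le (Fin.cases le_sup_left fun i => le_trans (le_iSup P i) le_sup_right)
  · refine sup_le ?_ (iSup_le fun i => ?_)
    · exact le_iSup (fun i : Fin (a + 1) => Fin.cons U P i) 0
    · exact le_iSup (fun i : Fin (a + 1) => Fin.cons U P i) i.succ

/-- splitting off a subspace on which `B` is nondegenerate -/
lemma split (B : V →ₗ[ℂ] V →ₗ[ℂ] ℂ) (halt : ∀ v, B v v = 0) {M N : Submodule ℂ V}
    (hMN : M ≤ N)
    (hNnd : ∀ v ∈ N, (∀ u ∈ N, B v u = 0) → v = 0)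
    (hMnd : ∀ v ∈ M, (∀ u ∈ M, B v u = 0) → v = 0) :
    Disjoint M (perp B M N) ∧ M ⊔ perp B M N = N ∧
    (∀ v ∈ perp B M N, (∀ u ∈ perp B M N, B v u = 0) → v = 0) ∧
    finrank ℂ M + finrank ℂ (perp B M N) = finrank ℂ N := by
  have hperpN : perp B M N ≤ N := inf_le_left
  have hdisj : Disjoint M (perp B M N) := by
    rw [Submodule.disjoint_def]
    intro v hvM hvp
    exact hMnd v hvM fun u hu => by
      rw [bskew B halt v u, (mem_perp.mp hvp).2 u hu, neg_zero]
  -- rank count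
  have hkermap : Submodule.map N.subtype (LinearMap.ker (pairMap B M N)) = perp B M N := by
    apply le_antisymm
    · rintro _ ⟨⟨x, hxN⟩, hx, rfl⟩
      refine mem_perp.mpr ⟨hxN, fun u hu => ?_⟩
      have := congrFun (congrArg DFunLike.coe (LinearMap.mem_ker.mp hx)) ⟨u, hu⟩
      simpa using this
    · intro v hv
      rcases mem_perp.mp hv with ⟨hvN, hvo⟩
      refine ⟨⟨v, hvN⟩, ?_, rfl⟩
      simp only [SetLike.mem_coe, LinearMap.mem_ker]
      ext ⟨u, hu⟩
      simpa using hvo u hu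
  have hrank : finrank ℂ M + finrank ℂ (perp B M N) ≥ finrank ℂ N := by
    have h1 := LinearMap.finrank_range_add_finrank_ker (pairMap B M N)
    have h2 : finrank ℂ (LinearMap.range (pairMap B M N)) ≤ finrank ℂ M := by
      have := Submodule.finrank_le (LinearMap.range (pairMap B M N))
      rwa [Subspace.dual_finrank_eq] at this
    have h3 : finrank ℂ (perp B M N) = finrank ℂ (LinearMap.ker (pairMap B M N)) := by
      rw [← hkermap]
      exact (Submodule.finrank_map_subtype_eq N _)
    omega
  have hsub : M ⊔ perp B M N ≤ N := sup_le hMN hperpN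
  have hranksup : finrank ℂ ↥(M ⊔ perp B M N) = finrank ℂ M + finrank ℂ (perp B M N) := by
    have := Submodule.finrank_sup_add_finrank_inf_eq M (perp B M N)
    rw [hdisj.eq_bot] at this
    simpa using this
  have hranksup' : finrank ℂ ↥(M ⊔ perp B M N) = finrank ℂ M + finrank ℂ (perp B M N) :=
    hranksup
  have hsup : M ⊔ perp B M N = N := by
    apply Submodule.eq_of_le_of_finrank_le hsub
    rw [hranksup']
    omega
  refine ⟨hdisj, hsup, ?_, by rw [← hranksup', hsup]⟩
  intro v hvp hvo
  rcases mem_perp.mp hvp with ⟨hvN, hvM⟩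
  refine hNnd v hvN fun u hu => ?_
  rw [← hsup] at hu
  obtain ⟨m, hm, p, hp, rfl⟩ := Submodule.mem_sup.mp hu
  rw [map_add, hvo p hp, add_zero, bskew B halt v m, hvM m hm, neg_zero]

end Aux



section Rep
variable {W : Type*} [Group W] {V : Type*} [AddCommGroup V] [Module ℂ V]
  [FiniteDimensional ℂ V]

lemma cancel (φ : Representation ℂ W V) (w : W) (u : V) : φ w (φ w⁻¹ u) = u := by
  have : φ w * φ w⁻¹ = 1 := by rw [← map_mul, mul_inv_cancel, map_one]
  calc φ w (φ w⁻¹ u) = (φ w * φ w⁻¹) u := rfl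
    _ = u := by rw [this]; rfl

lemma perp_inv {η : W →* ℂˣ} {φ : Representation ℂ W V} {B : V →ₗ[ℂ] V →ₗ[ℂ] ℂ}
    (hequiv : ∀ (w : W) (u v : V), B (φ w u) (φ w v) = (η w : ℂ) * B u v)
    {M N : Submodule ℂ V} (hM : ∀ w : W, ∀ v ∈ M, φ w v ∈ M)
    (hN : ∀ w : W, ∀ v ∈ N, φ w v ∈ N) :
    ∀ w : W, ∀ v ∈ perp B M N, φ w v ∈ perp B M N := by
  intro w v hv
  rcases mem_perp.mp hv with ⟨hvN, hvo⟩
  refine mem_perp.mpr ⟨hN w v hvN, fun u hu => ?_⟩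
  have : B (φ w (φ w⁻¹ u)) (φ w v) = (η w : ℂ) * B (φ w⁻¹ u) v := hequiv w _ v
  rw [cancel φ w u] at this
  rw [this, hvo _ (hM w⁻¹ u hu), mul_zero]

lemma exists_minimal (φ : Representation ℂ W V) :
    ∀ (k : ℕ) (N : Submodule ℂ V), finrank ℂ N ≤ k →
      (∀ w : W, ∀ v ∈ N, φ w v ∈ N) → N ≠ ⊥ →
      ∃ U : Submodule ℂ V, U ≤ N ∧ (∀ w : W, ∀ v ∈ U, φ w v ∈ U) ∧ U ≠ ⊥ ∧
        ∀ q : Submodule ℂ V, q ≤ U → (∀ w : W, ∀ v ∈ q, φ w v ∈ q) → q = ⊥ ∨ q = U := by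
  intro k
  induction k with
  | zero =>
    intro N hk hi hb
    exact absurd (Submodule.finrank_eq_zero.mp (Nat.le_zero.mp hk)) hb
  | succ k ih =>
    intro N hk hi hb
    by_cases h : ∀ q : Submodule ℂ V, q ≤ N → (∀ w : W, ∀ v ∈ q, φ w v ∈ q) → q = ⊥ ∨ q = N
    · exact ⟨N, le_rfl, hi, hb, h⟩
    · push_neg at h
      obtain ⟨q, hqN, hqi, hq1, hq2⟩ := h
      have hlt : finrank ℂ q < finrank ℂ N :=
        Submodule.finrank_lt_finrank_of_lt (lt_of_le_of_ne hqN hq2)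
      obtain ⟨U, hUq, h1, h2, h3⟩ := ih q (by omega) hqi hq1
      exact ⟨U, hUq.trans hqN, h1, h2, h3⟩

end Rep

section Cons
variable {V : Type*} [AddCommGroup V] [Module ℂ V] [FiniteDimensional ℂ V]

lemma indep_consP {a : ℕ} {σ : Type*} (P : Fin a → Submodule ℂ V)
    (g2 : σ → Submodule ℂ V) (U N₂ : Submodule ℂ V)
    (hind : iSupIndep (Sum.elim P g2)) (hsup : iSup (Sum.elim P g2) = N₂)
    (hd : Disjoint U N₂) :
    iSupIndep (Sum.elim (Fin.cons U P) g2) ∧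
      iSup (Sum.elim (Fin.cons U P) g2) = U ⊔ N₂ := by
  set g := Sum.elim P g2 with hg
  set f := Sum.elim (Fin.cons U P) g2 with hf
  have hle : ∀ s : σ, g2 s ≤ N₂ := fun s => hsup ▸ le_iSup g (Sum.inr s)
  have hPle : ∀ i : Fin a, P i ≤ N₂ := fun i => hsup ▸ le_iSup g (Sum.inl i)
  have hsupf : iSup f = U ⊔ N₂ := by
    rw [hf, iSup_sum]
    simp only [Sum.elim_inl, Sum.elim_inr]
    rw [iSup_fin_cons, ← hsup, iSup_sum]
    simp only [Sum.elim_inl, Sum.elim_inr, sup_assoc]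
  refine ⟨?_, hsupf⟩
  intro x
  have hrest : ∀ x₀ : Fin (a + 1) ⊕ σ,
      (⨆ (y) (_ : y ≠ x₀), f y) ≤ U ⊔ iSup g := by
    intro x₀
    refine iSup₂_le fun y _ => ?_
    rcases y with i | s
    · refine Fin.cases ?_ (fun i => ?_) i
      · exact le_sup_left
      · exact le_trans (le_iSup g (Sum.inl i)) le_sup_right
    · exact le_trans (le_iSup g (Sum.inr s)) le_sup_right
  rcases x with i | s
  · refine Fin.cases ?_ (fun i => ?_) i
    · -- new piece U
      have hbound : (⨆ (y) (_ : y ≠ (Sum.inl 0 : Fin (a + 1) ⊕ σ)), f y) ≤ N₂ := by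
        refine iSup₂_le fun y hy => ?_
        rcases y with j | s
        · have hj : j ≠ 0 := fun h => hy (by rw [h])
          obtain ⟨j', rfl⟩ := Fin.exists_succ_eq.mpr hj
          exact hPle j'
        · exact hle s
      exact Disjoint.mono_right hbound (by simpa [hf] using hd)
    · -- old piece P i
      have hbound : (⨆ (y) (_ : y ≠ (Sum.inl i.succ : Fin (a + 1) ⊕ σ)), f y) ≤
          (⨆ (y) (_ : y ≠ (Sum.inl i : Fin a ⊕ σ)), g y) ⊔ U := by
        refine iSup₂_le fun y hy => ?_
        rcases y with j | s
        · revert hy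
          refine Fin.cases ?_ (fun j => ?_) j <;> intro hy
          · exact le_sup_right
          · have : (Sum.inl j : Fin a ⊕ σ) ≠ Sum.inl i := by
              intro h
              rw [Sum.inl.injEq] at h
              exact hy (by rw [h])
            exact le_trans (le_iSup₂ (f := fun y _ => g y) (Sum.inl j) this) le_sup_left
        · have : (Sum.inr s : Fin a ⊕ σ) ≠ Sum.inl i := by simp
          exact le_trans (le_iSup₂ (f := fun y _ => g y) (Sum.inr s) this) le_sup_left
      refine Disjoint.mono_right hbound ?_
      have hAY : Disjoint (P i) (⨆ (y) (_ : y ≠ (Sum.inl i : Fin a ⊕ σ)), g y) := by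
        simpa [hg] using hind (Sum.inl i)
      have hYN : (⨆ (y) (_ : y ≠ (Sum.inl i : Fin a ⊕ σ)), g y) ≤ N₂ := by
        rw [← hsup]; exact iSup₂_le fun y _ => le_iSup g y
      simpa [hf] using master_disjoint (hPle i) hYN (le_refl U) hd hAY
  · -- old piece g2 s
    have hbound : (⨆ (y) (_ : y ≠ (Sum.inr s : Fin (a + 1) ⊕ σ)), f y) ≤
        (⨆ (y) (_ : y ≠ (Sum.inr s : Fin a ⊕ σ)), g y) ⊔ U := by
      refine iSup₂_le fun y hy => ?_
      rcases y with j | t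
      · refine Fin.cases ?_ (fun j => ?_) j
        · exact le_sup_right
        · have : (Sum.inl j : Fin a ⊕ σ) ≠ Sum.inr s := by simp
          exact le_trans (le_iSup₂ (f := fun y _ => g y) (Sum.inl j) this) le_sup_left
      · have : (Sum.inr t : Fin a ⊕ σ) ≠ Sum.inr s := by
          intro h
          rw [Sum.inr.injEq] at h
          exact hy (by rw [h])
        exact le_trans (le_iSup₂ (f := fun y _ => g y) (Sum.inr t) this) le_sup_left
    refine Disjoint.mono_right hbound ?_
    have hAY : Disjoint (g2 s) (⨆ (y) (_ : y ≠ (Sum.inr s : Fin a ⊕ σ)), g y) := by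
      simpa [hg] using hind (Sum.inr s)
    have hYN : (⨆ (y) (_ : y ≠ (Sum.inr s : Fin a ⊕ σ)), g y) ≤ N₂ := by
      rw [← hsup]; exact iSup₂_le fun y _ => le_iSup g y
    simpa [hf] using master_disjoint (hle s) hYN (le_refl U) hd hAY

end Cons

section ConsQR
variable {V : Type*} [AddCommGroup V] [Module ℂ V] [FiniteDimensional ℂ V]

lemma indep_consQR {a c : ℕ} (P : Fin a → Submodule ℂ V)
    (Q R : Fin c → Submodule ℂ V) (U U' N₂ : Submodule ℂ V)
    (hind : iSupIndep (Sum.elim P (Sum.elim Q R)))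
    (hsup : iSup (Sum.elim P (Sum.elim Q R)) = N₂)
    (hdUU' : Disjoint U U') (hd : Disjoint (U ⊔ U') N₂) :
    iSupIndep (Sum.elim P (Sum.elim (Fin.cons U Q) (Fin.cons U' R))) ∧
      iSup (Sum.elim P (Sum.elim (Fin.cons U Q) (Fin.cons U' R))) = (U ⊔ U') ⊔ N₂ := by
  set g := Sum.elim P (Sum.elim Q R) with hg
  set f := Sum.elim P (Sum.elim (Fin.cons U Q) (Fin.cons U' R)) with hf
  have hgle : ∀ y, g y ≤ N₂ := fun y => hsup ▸ le_iSup g y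
  have hsupf : iSup f = (U ⊔ U') ⊔ N₂ := by
    rw [hf, iSup_sum, iSup_sum]
    simp only [Sum.elim_inl, Sum.elim_inr]
    rw [iSup_fin_cons, iSup_fin_cons, ← hsup, iSup_sum, iSup_sum]
    simp only [Sum.elim_inl, Sum.elim_inr]
    -- ⨆P ⊔ ((U ⊔ ⨆Q) ⊔ (U' ⊔ ⨆R)) = (U ⊔ U') ⊔ (⨆P ⊔ (⨆Q ⊔ ⨆R))
    generalize (⨆ i, P i) = sP
    generalize (⨆ i, Q i) = sQ
    generalize (⨆ i, R i) = sR
    apply le_antisymm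
    · apply sup_le
      · exact le_sup_of_le_right le_sup_left
      · apply sup_le
        · apply sup_le
          · exact le_sup_of_le_left le_sup_left
          · exact le_sup_of_le_right (le_sup_of_le_right le_sup_left)
        · apply sup_le
          · exact le_sup_of_le_left le_sup_right
          · exact le_sup_of_le_right (le_sup_of_le_right le_sup_right)
    · apply sup_le
      · apply sup_le
        · exact le_sup_of_le_right (le_sup_of_le_left le_sup_left)
        · exact le_sup_of_le_right (le_sup_of_le_right le_sup_left)
      · apply sup_le
        · exact le_sup_left
        · apply sup_le
          · exact le_sup_of_le_right (le_sup_of_le_left le_sup_right)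
          · exact le_sup_of_le_right (le_sup_of_le_right le_sup_right)
  refine ⟨?_, hsupf⟩
  intro x
  -- bound for old indices
  have hboundold : ∀ x₀ : Fin a ⊕ (Fin c ⊕ Fin c),
      ∀ x₁ : Fin a ⊕ (Fin (c + 1) ⊕ Fin (c + 1)),
      (∀ y : Fin a ⊕ (Fin c ⊕ Fin c),
        (match y with
          | Sum.inl i => (Sum.inl i : Fin a ⊕ (Fin (c + 1) ⊕ Fin (c + 1)))
          | Sum.inr (Sum.inl j) => Sum.inr (Sum.inl j.succ)
          | Sum.inr (Sum.inr j) => Sum.inr (Sum.inr j.succ)) ≠ x₁ → y ≠ x₀) →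
      (⨆ (y) (_ : y ≠ x₁), f y) ≤ (⨆ (y) (_ : y ≠ x₀), g y) ⊔ (U ⊔ U') := by
    intro x₀ x₁ hcomp
    refine iSup₂_le fun y hy => ?_
    rcases y with i | jj
    · have : (Sum.inl i : Fin a ⊕ (Fin c ⊕ Fin c)) ≠ x₀ := hcomp (Sum.inl i) hy
      exact le_trans (le_iSup₂ (f := fun y _ => g y) (Sum.inl i) this) le_sup_left
    · rcases jj with j | j
      · revert hy
        refine Fin.cases ?_ (fun j => ?_) j <;> intro hy
        · exact le_sup_of_le_right le_sup_left
        · have : (Sum.inr (Sum.inl j) : Fin a ⊕ (Fin c ⊕ Fin c)) ≠ x₀ :=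
            hcomp (Sum.inr (Sum.inl j)) hy
          exact le_trans (le_iSup₂ (f := fun y _ => g y) (Sum.inr (Sum.inl j)) this)
            le_sup_left
      · revert hy
        refine Fin.cases ?_ (fun j => ?_) j <;> intro hy
        · exact le_sup_of_le_right le_sup_right
        · have : (Sum.inr (Sum.inr j) : Fin a ⊕ (Fin c ⊕ Fin c)) ≠ x₀ :=
            hcomp (Sum.inr (Sum.inr j)) hy
          exact le_trans (le_iSup₂ (f := fun y _ => g y) (Sum.inr (Sum.inr j)) this)
            le_sup_left
  have holddisj : ∀ x₀ : Fin a ⊕ (Fin c ⊕ Fin c),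
      Disjoint (g x₀) ((⨆ (y) (_ : y ≠ x₀), g y) ⊔ (U ⊔ U')) := by
    intro x₀
    have hYN : (⨆ (y) (_ : y ≠ x₀), g y) ≤ N₂ := iSup₂_le fun y _ => hgle y
    exact master_disjoint (hgle x₀) hYN (le_refl (U ⊔ U')) hd (hind x₀)
  rcases x with i | jj
  · refine Disjoint.mono_right (hboundold (Sum.inl i) (Sum.inl i) ?_) (holddisj (Sum.inl i))
    rintro (i' | (j | j)) h
    · simp only [ne_eq, Sum.inl.injEq] at h ⊢; exact h
    · simp
    · simp
  · rcases jj with j | j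
    · revert hind
      refine Fin.cases ?_ (fun j => ?_) j <;> intro hind
      · -- new piece U
        have hbound : (⨆ (y) (_ : y ≠ (Sum.inr (Sum.inl 0) :
            Fin a ⊕ (Fin (c + 1) ⊕ Fin (c + 1)))), f y) ≤ U' ⊔ N₂ := by
          refine iSup₂_le fun y hy => ?_
          rcases y with i | (j | j)
          · exact le_sup_of_le_right (hgle (Sum.inl i))
          · have hj : j ≠ 0 := fun h => hy (by rw [h])
            obtain ⟨j', rfl⟩ := Fin.exists_succ_eq.mpr hj
            exact le_sup_of_le_right (hgle (Sum.inr (Sum.inl j')))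
          · refine Fin.cases ?_ (fun j' => ?_) j
            · exact le_sup_left
            · exact le_sup_of_le_right (hgle (Sum.inr (Sum.inr j')))
        refine Disjoint.mono_right hbound ?_
        have : Disjoint U (U' ⊔ N₂) :=
          master_disjoint (le_sup_left : U ≤ U ⊔ U') le_sup_right (le_refl N₂)
            hd.symm hdUU'
        simpa [hf] using this
      · -- old piece Q j
        refine Disjoint.mono_right
          (hboundold (Sum.inr (Sum.inl j)) (Sum.inr (Sum.inl j.succ)) ?_) ?_
        · rintro (i' | (j' | j')) h
          · simp
          · simp only [ne_eq, Sum.inr.injEq, Sum.inl.injEq, Fin.succ_inj] at h ⊢; exact h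
          · simp
        · simpa [hf, hg] using holddisj (Sum.inr (Sum.inl j))
    · revert hind
      refine Fin.cases ?_ (fun j => ?_) j <;> intro hind
      · -- new piece U'
        have hbound : (⨆ (y) (_ : y ≠ (Sum.inr (Sum.inr 0) :
            Fin a ⊕ (Fin (c + 1) ⊕ Fin (c + 1)))), f y) ≤ U ⊔ N₂ := by
          refine iSup₂_le fun y hy => ?_
          rcases y with i | (j | j)
          · exact le_sup_of_le_right (hgle (Sum.inl i))
          · refine Fin.cases ?_ (fun j' => ?_) j
            · exact le_sup_left
            · exact le_sup_of_le_right (hgle (Sum.inr (Sum.inl j')))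
          · have hj : j ≠ 0 := fun h => hy (by rw [h])
            obtain ⟨j', rfl⟩ := Fin.exists_succ_eq.mpr hj
            exact le_sup_of_le_right (hgle (Sum.inr (Sum.inr j')))
        refine Disjoint.mono_right hbound ?_
        have : Disjoint U' (U ⊔ N₂) :=
          master_disjoint (le_sup_right : U' ≤ U ⊔ U') le_sup_left (le_refl N₂)
            hd.symm hdUU'.symm
        simpa [hf] using this
      · -- old piece R j
        refine Disjoint.mono_right
          (hboundold (Sum.inr (Sum.inr j)) (Sum.inr (Sum.inr j.succ)) ?_) ?_
        · rintro (i' | (j' | j')) h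
          · simp
          · simp
          · simp only [ne_eq, Sum.inr.injEq, Fin.succ_inj] at h ⊢; exact h
        · simpa [hf, hg] using holddisj (Sum.inr (Sum.inr j))

end ConsQR

def Conc {W : Type*} [Group W] {V : Type*} [AddCommGroup V] [Module ℂ V]
    (η : W →* ℂˣ) (φ : Representation ℂ W V) (N : Submodule ℂ V) : Prop :=
  ∃ (a c : ℕ) (P : Fin a → Submodule ℂ V) (Q R : Fin c → Submodule ℂ V),
    iSupIndep (Sum.elim P (Sum.elim Q R)) ∧
    iSup (Sum.elim P (Sum.elim Q R)) = N ∧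
    (∀ i, ∀ w : W, ∀ v ∈ P i, φ w v ∈ P i) ∧
    (∀ i, Module.finrank ℂ (P i) = 2) ∧
    (∀ i, P i ≠ ⊥ ∧ ∀ q : Submodule ℂ V, q ≤ P i →
      (∀ w : W, ∀ v ∈ q, φ w v ∈ q) → q = ⊥ ∨ q = P i) ∧
    (∀ i, HasTwistedSymplecticFormOn φ η (P i)) ∧
    ∃ hQ : ∀ (j) (w : W), ∀ v ∈ Q j, φ w v ∈ Q j,
      (∀ j, Q j ≠ ⊥ ∧ ∀ q : Submodule ℂ V, q ≤ Q j →
        (∀ w : W, ∀ v ∈ q, φ w v ∈ q) → q = ⊥ ∨ q = Q j) ∧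
      (∀ j, ¬ HasTwistedSymplecticFormOn φ η (Q j)) ∧
      (∀ j, ∀ w : W, ∀ v ∈ R j, φ w v ∈ R j) ∧
      (∀ j, ∃ ι : Module.Dual ℂ (Q j) →ₗ[ℂ] V, Function.Injective ι ∧
        LinearMap.range ι = R j ∧
        ∀ (w : W) (f : Module.Dual ℂ (Q j)),
          φ w (ι f) = ι ((η w : ℂ) •
            (f ∘ₗ (φ w⁻¹).restrict (fun v hv => hQ j w⁻¹ v hv))))

lemma conc_bot {W : Type*} [Group W] {V : Type*} [AddCommGroup V] [Module ℂ V]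
    (η : W →* ℂˣ) (φ : Representation ℂ W V) : Conc η φ ⊥ := by
  refine ⟨0, 0, Fin.elim0, Fin.elim0, Fin.elim0, ?_, ?_, fun i => i.elim0, fun i => i.elim0,
    fun i => i.elim0, fun i => i.elim0,
    ⟨fun j => j.elim0, fun j => j.elim0, fun j => j.elim0, fun j => j.elim0, fun j => j.elim0⟩⟩
  · intro x; rcases x with i | (i | i) <;> exact i.elim0
  · exact iSup_of_empty _

lemma main_ind {W : Type*} [Group W] {V : Type*} [AddCommGroup V] [Module ℂ V]
    [FiniteDimensional ℂ V] (η : W →* ℂˣ) (φ : Representation ℂ W V)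
    (hss : ∀ q : Submodule ℂ V, (∀ w : W, ∀ v ∈ q, φ w v ∈ q) →
      ∃ q' : Submodule ℂ V, (∀ w : W, ∀ v ∈ q', φ w v ∈ q') ∧ IsCompl q q')
    (hdim2 : ∀ p : Submodule ℂ V, (∀ w : W, ∀ v ∈ p, φ w v ∈ p) → p ≠ ⊥ →
      (∀ q : Submodule ℂ V, q ≤ p → (∀ w : W, ∀ v ∈ q, φ w v ∈ q) → q = ⊥ ∨ q = p) →
      Module.finrank ℂ p ≤ 2)
    (B : V →ₗ[ℂ] V →ₗ[ℂ] ℂ) (halt : ∀ v : V, B v v = 0)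
    (hequiv : ∀ (w : W) (u v : V), B (φ w u) (φ w v) = (η w : ℂ) * B u v) :
    ∀ (k : ℕ) (N : Submodule ℂ V), finrank ℂ N ≤ k →
      (∀ w : W, ∀ v ∈ N, φ w v ∈ N) →
      (∀ v ∈ N, (∀ u ∈ N, B v u = 0) → v = 0) →
      Conc η φ N := by
  intro k
  induction k with
  | zero =>
    intro N hk _ _
    rw [Submodule.finrank_eq_zero.mp (Nat.le_zero.mp hk)]
    exact conc_bot η φ
  | succ k ih =>
    intro N hk hNinv hNnd
    by_cases hN0 : N = ⊥
    · rw [hN0]; exact conc_bot η φ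
    obtain ⟨U, hUN, hUinv, hU0, hUmin⟩ := exists_minimal φ (finrank ℂ N) N le_rfl hNinv hN0
    by_cases hA : ∃ U₀ : Submodule ℂ V,
        (U₀ ≤ N ∧ (∀ w : W, ∀ v ∈ U₀, φ w v ∈ U₀) ∧ U₀ ≠ ⊥ ∧
          (∀ q : Submodule ℂ V, q ≤ U₀ → (∀ w : W, ∀ v ∈ q, φ w v ∈ q) → q = ⊥ ∨ q = U₀)) ∧
        (∀ v ∈ U₀, (∀ u ∈ U₀, B v u = 0) → v = 0)
    · -- Case A: some irreducible on which B is nondegenerate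
      clear hUN hUinv hU0 hUmin U
      obtain ⟨U, ⟨hUN, hUinv, hU0, hUmin⟩, hUnd⟩ := hA
      obtain ⟨hdisj, hsupUN, hN₂nd, hranks⟩ := split B halt hUN hNnd hUnd
      have hN₂inv := perp_inv hequiv hUinv hNinv
      have hU2 : finrank ℂ U = 2 := by
        have hle2 : finrank ℂ U ≤ 2 := hdim2 U hUinv hU0 hUmin
        have hpos : finrank ℂ U ≠ 0 := fun h => hU0 (Submodule.finrank_eq_zero.mp h)
        have hne1 : finrank ℂ U ≠ 1 := by
          intro h1
          obtain ⟨v₀, hv₀, hall⟩ := finrank_eq_one_iff'.mp h1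
          apply hv₀
          have hz : (v₀ : V) = 0 := by
            apply hUnd v₀ v₀.2
            intro u hu
            obtain ⟨cc, hcc⟩ := hall ⟨u, hu⟩
            have hu' : u = cc • (v₀ : V) := by
              have h := congrArg Subtype.val hcc
              simpa using h.symm
            rw [hu', map_smul, smul_eq_mul, halt, mul_zero]
          exact Subtype.ext hz
        omega
      have hk₂ : finrank ℂ (perp B U N) ≤ k := by omega
      obtain ⟨a, c, P, Q, R, hind, hsup, hPinv, hP2, hPirr, hPsymp, hQ, hQirr, hQnof,
        hRinv, hRdual⟩ := ih (perp B U N) hk₂ hN₂inv hN₂nd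
      obtain ⟨hind', hsup'⟩ := indep_consP P (Sum.elim Q R) U (perp B U N) hind hsup hdisj
      refine ⟨a + 1, c, Fin.cons U P, Q, R, hind', by rw [hsup']; exact hsupUN,
        ?_, ?_, ?_, ?_, ⟨hQ, hQirr, hQnof, hRinv, hRdual⟩⟩
      · exact Fin.cases hUinv hPinv
      · exact Fin.cases hU2 hP2
      · exact Fin.cases ⟨hU0, hUmin⟩ hPirr
      · exact Fin.cases ⟨B, fun v _ => halt v, hUnd, fun w u _ v _ => hequiv w u v⟩ hPsymp
    · -- Case B: every irreducible inside N is isotropic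
      have hiso : ∀ U₁ : Submodule ℂ V, U₁ ≤ N → (∀ w : W, ∀ v ∈ U₁, φ w v ∈ U₁) →
          U₁ ≠ ⊥ →
          (∀ q : Submodule ℂ V, q ≤ U₁ → (∀ w : W, ∀ v ∈ q, φ w v ∈ q) → q = ⊥ ∨ q = U₁) →
          ∀ u ∈ U₁, ∀ v ∈ U₁, B u v = 0 := by
        intro U₁ h1 h2 h3 h4
        have hnd : ¬ (∀ v ∈ U₁, (∀ u ∈ U₁, B v u = 0) → v = 0) := by
          intro hcon
          exact hA ⟨U₁, ⟨h1, h2, h3, h4⟩, hcon⟩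
        have hrad : perp B U₁ U₁ = U₁ := by
          rcases h4 (perp B U₁ U₁) inf_le_left (perp_inv hequiv h2 h2) with hbot | htop
          · exfalso
            apply hnd
            intro v hv hvo
            have hmem : v ∈ perp B U₁ U₁ := mem_perp.mpr ⟨hv, fun u hu => by
              rw [bskew B halt u v, hvo u hu, neg_zero]⟩
            rw [hbot] at hmem
            simpa using hmem
          · exact htop
        intro u hu v hv
        have hmem : v ∈ perp B U₁ U₁ := by rw [hrad]; exact hv
        exact (mem_perp.mp hmem).2 u hu
      have hU00 : ∀ u ∈ U, ∀ v ∈ U, B u v = 0 := hiso U hUN hUinv hU0 hUmin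
      have hUpinv := perp_inv hequiv hUinv hNinv
      have hUpN : perp B U N ≤ N := inf_le_left
      have hUUp : U ≤ perp B U N := fun u hu =>
        mem_perp.mpr ⟨hUN hu, fun u' hu' => hU00 u' hu' u hu⟩
      have hUpne : perp B U N ≠ N := by
        intro hEq
        obtain ⟨u₀, hu₀U, hu₀⟩ := (Submodule.ne_bot_iff U).mp hU0
        apply hu₀
        apply hNnd u₀ (hUN hu₀U)
        intro u hu
        have hmem : u ∈ perp B U N := by rw [hEq]; exact hu
        exact (mem_perp.mp hmem).2 u₀ hu₀U
      obtain ⟨q', hq'inv, hq'compl⟩ := hss (perp B U N) hUpinv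
      have hCinv : ∀ w : W, ∀ v ∈ q' ⊓ N, φ w v ∈ q' ⊓ N := fun w v hv =>
        ⟨hq'inv w v hv.1, hNinv w v hv.2⟩
      have hCN : q' ⊓ N ≤ N := inf_le_right
      have hUpC : perp B U N ⊔ q' ⊓ N = N := by
        have h1 : (perp B U N ⊔ q') ⊓ N = perp B U N ⊔ q' ⊓ N :=
          sup_inf_assoc_of_le q' hUpN
        rw [hq'compl.codisjoint.eq_top, top_inf_eq] at h1
        exact h1.symm
      have hUpCdisj : Disjoint (perp B U N) (q' ⊓ N) :=
        Disjoint.mono_right inf_le_left hq'compl.disjoint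
      have hC0 : q' ⊓ N ≠ ⊥ := by
        intro h
        rw [h, sup_bot_eq] at hUpC
        exact hUpne hUpC
      obtain ⟨U', hU'C, hU'inv, hU'0, hU'min⟩ :=
        exists_minimal φ (finrank ℂ ↥(q' ⊓ N)) (q' ⊓ N) le_rfl hCinv hC0
      have hU'N : U' ≤ N := hU'C.trans hCN
      have hU'00 : ∀ u ∈ U', ∀ v ∈ U', B u v = 0 := hiso U' hU'N hU'inv hU'0 hU'min
      have hRK : ∀ x ∈ U', (∀ u ∈ U, B u x = 0) → x = 0 := by
        intro x hx h
        have hxUp : x ∈ perp B U N := mem_perp.mpr ⟨hU'N hx, h⟩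
        exact Submodule.disjoint_def.mp hUpCdisj x hxUp (hU'C hx)
      have hLK : ∀ u ∈ U, (∀ x ∈ U', B u x = 0) → u = 0 := by
        intro u hu h
        have hperpne : perp B U' U ≠ U := by
          intro hEq
          apply hU'0
          rw [Submodule.eq_bot_iff]
          intro x hx
          apply Submodule.disjoint_def.mp hUpCdisj x ?_ (hU'C hx)
          refine mem_perp.mpr ⟨hU'N hx, fun u' hu' => ?_⟩
          have hmem : u' ∈ perp B U' U := by rw [hEq]; exact hu'
          rw [bskew B halt u' x, (mem_perp.mp hmem).2 x hx, neg_zero]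
        rcases hUmin (perp B U' U) inf_le_left (perp_inv hequiv hU'inv hUinv) with hbot | htop
        · have hmem : u ∈ perp B U' U := mem_perp.mpr ⟨hu, fun x hx => by
            rw [bskew B halt x u, h x hx, neg_zero]⟩
          rw [hbot] at hmem
          simpa using hmem
        · exact absurd htop hperpne
      have hd1 : finrank ℂ U' ≤ finrank ℂ U := pairMap_rank hRK
      have hd2 : finrank ℂ U ≤ finrank ℂ U' := pairMap_rank (fun u hu h =>
        hLK u hu (fun x hx => by rw [bskew B halt u x, h x hx, neg_zero]))
      have hUU' : Disjoint U U' := Disjoint.mono hUUp hU'C hUpCdisj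
      have hMinv : ∀ w : W, ∀ v ∈ U ⊔ U', φ w v ∈ U ⊔ U' := by
        intro w v hv
        obtain ⟨u, hu, x, hx, rfl⟩ := Submodule.mem_sup.mp hv
        rw [map_add]
        exact Submodule.add_mem_sup (hUinv w u hu) (hU'inv w x hx)
      have hMN : U ⊔ U' ≤ N := sup_le hUN hU'N
      have hMnd : ∀ v ∈ U ⊔ U', (∀ u ∈ U ⊔ U', B v u = 0) → v = 0 := by
        intro v hv hvo
        obtain ⟨u, hu, x, hx, rfl⟩ := Submodule.mem_sup.mp hv
        have hu0 : u = 0 := by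
          apply hLK u hu
          intro y hy
          have h1 := hvo y (Submodule.mem_sup_right hy)
          simp only [map_add, LinearMap.add_apply] at h1
          rw [hU'00 x hx y hy, add_zero] at h1
          exact h1
        have hx0 : x = 0 := by
          apply hRK x hx
          intro y hy
          have h1 := hvo y (Submodule.mem_sup_left hy)
          simp only [hu0, map_add, LinearMap.add_apply, map_zero, LinearMap.zero_apply,
            zero_add] at h1
          rw [bskew B halt y x, h1, neg_zero]
        rw [hu0, hx0, add_zero]
      obtain ⟨hMdisj, hsupMN, hN₂nd, hranks⟩ := split B halt hMN hNnd hMnd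
      have hN₂inv := perp_inv hequiv hMinv hNinv
      have hUpos : finrank ℂ U ≠ 0 := fun h => hU0 (Submodule.finrank_eq_zero.mp h)
      have hMrank : 1 ≤ finrank ℂ ↥(U ⊔ U') := by
        have hmono : finrank ℂ U ≤ finrank ℂ ↥(U ⊔ U') :=
          Submodule.finrank_mono le_sup_left
        omega
      obtain ⟨a, c, P, Q, R, hind, hsup, hPinv, hP2, hPirr, hPsymp, hQ, hQirr, hQnof,
        hRinv, hRdual⟩ := ih (perp B (U ⊔ U') N) (by omega) hN₂inv hN₂nd
      have hnoform : ¬ HasTwistedSymplecticFormOn φ η U := by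
        rintro ⟨B', hB'alt, hB'nd, hB'eq⟩
        have hB'skew : ∀ u ∈ U, ∀ v ∈ U, B' u v = - B' v u := by
          intro u hu v hv
          have h := hB'alt (u + v) (Submodule.add_mem U hu hv)
          simp only [map_add, LinearMap.add_apply, hB'alt u hu, hB'alt v hv] at h
          linear_combination h
        have hB'ndr : ∀ z ∈ U, (∀ u ∈ U, B' u z = 0) → z = 0 := fun z hz h =>
          hB'nd z hz fun u hu => by rw [hB'skew z hz u hu, h u hu, neg_zero]
        have hEinj : Function.Injective (pairMap B' U U) := pairMap_inj hB'ndr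
        have hEbij : Function.Bijective (pairMap B' U U) :=
          ⟨hEinj, (LinearMap.injective_iff_surjective_of_finrank_eq_finrank
            (Subspace.dual_finrank_eq).symm).mp hEinj⟩
        obtain ⟨ψ, hψ⟩ : ∃ ψ : U' →ₗ[ℂ] U,
            ∀ (x : U') (u : U), B u x = B' u (ψ x) := by
          refine ⟨((LinearEquiv.ofBijective (pairMap B' U U) hEbij).symm :
            Module.Dual ℂ U →ₗ[ℂ] U).comp (pairMap B U U'), fun x u => ?_⟩
          have h1 : pairMap B' U U ((LinearEquiv.ofBijective (pairMap B' U U) hEbij).symm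
              (pairMap B U U' x)) = pairMap B U U' x :=
            (LinearEquiv.ofBijective (pairMap B' U U) hEbij).apply_symm_apply _
          have h2 := congrFun (congrArg DFunLike.coe h1) u
          exact h2.symm
        have hψinj : Function.Injective ψ := by
          intro x y hxy
          have hz : ((x : V) - y) = 0 := by
            apply hRK _ (Submodule.sub_mem U' x.2 y.2)
            intro u hu
            have hx := hψ x ⟨u, hu⟩
            have hy := hψ y ⟨u, hu⟩
            rw [hxy] at hx
            rw [map_sub, hx, hy, sub_self]
          exact Subtype.ext (by rw [← sub_eq_zero]; exact hz)
        have hψsurj : Function.Surjective ψ :=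
          (LinearMap.injective_iff_surjective_of_finrank_eq_finrank
            (by omega : finrank ℂ U' = finrank ℂ U)).mp hψinj
        have hψequiv : ∀ (w : W) (x : U'),
            ((ψ ⟨φ w (x : V), hU'inv w _ x.2⟩ : U) : V) = φ w ((ψ x : V)) := by
          intro w x
          have hmem2 : φ w ((ψ x : V)) ∈ U := hUinv w _ (ψ x).2
          have hdiff : ((ψ ⟨φ w (x : V), hU'inv w _ x.2⟩ : V) - φ w ((ψ x : V))) = 0 := by
            apply hB'ndr _ (Submodule.sub_mem U (ψ ⟨φ w (x : V), hU'inv w _ x.2⟩).2 hmem2)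
            intro u hu
            rw [map_sub]
            have h1 : B' u ((ψ ⟨φ w (x : V), hU'inv w _ x.2⟩ : V)) = B u (φ w (x : V)) :=
              (hψ ⟨φ w (x : V), hU'inv w _ x.2⟩ ⟨u, hu⟩).symm
            have h2 : B' (φ w (φ w⁻¹ u)) (φ w ((ψ x : V))) =
                (η w : ℂ) * B' (φ w⁻¹ u) ((ψ x : V)) :=
              hB'eq w _ (hUinv w⁻¹ u hu) _ (ψ x).2
            rw [cancel φ w u] at h2
            have h3 : B' (φ w⁻¹ u) ((ψ x : V)) = B (φ w⁻¹ u) (x : V) :=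
              (hψ x ⟨φ w⁻¹ u, hUinv w⁻¹ u hu⟩).symm
            have h4 : B (φ w (φ w⁻¹ u)) (φ w (x : V)) =
                (η w : ℂ) * B (φ w⁻¹ u) (x : V) := hequiv w _ _
            rw [cancel φ w u] at h4
            rw [h1, h2, h3, h4, sub_self]
          rw [← sub_eq_zero]; exact hdiff
        -- the graph of ψ
        have hjmval : ∀ x : U', (U.subtype.comp ψ + U'.subtype) x = (ψ x : V) + (x : V) :=
          fun x => rfl
        have hker : ∀ z : U', (U.subtype.comp ψ + U'.subtype) z = 0 → z = 0 := by
          intro z hz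
          rw [hjmval] at hz
          have h1 : (ψ z : V) = -(z : V) := eq_neg_of_add_eq_zero_left hz
          have h2 : (ψ z : V) ∈ U' := by rw [h1]; exact Submodule.neg_mem _ z.2
          have h3 : (ψ z : V) = 0 := Submodule.disjoint_def.mp hUU' _ (ψ z).2 h2
          have h4 : (z : V) = 0 := by
            rw [h3] at h1
            exact neg_eq_zero.mp h1.symm
          exact Subtype.ext h4
        have hGinv : ∀ w : W, ∀ v ∈ LinearMap.range (U.subtype.comp ψ + U'.subtype),
            φ w v ∈ LinearMap.range (U.subtype.comp ψ + U'.subtype) := by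
          rintro w v ⟨x, rfl⟩
          refine ⟨⟨φ w (x : V), hU'inv w _ x.2⟩, ?_⟩
          rw [hjmval, hjmval, hψequiv w x, map_add]
        have hG0 : LinearMap.range (U.subtype.comp ψ + U'.subtype) ≠ ⊥ := by
          obtain ⟨x₀, hx₀, hx₀0⟩ := (Submodule.ne_bot_iff U').mp hU'0
          refine (Submodule.ne_bot_iff _).mpr
            ⟨(U.subtype.comp ψ + U'.subtype) ⟨x₀, hx₀⟩, ⟨⟨x₀, hx₀⟩, rfl⟩, ?_⟩
          intro h
          have := hker ⟨x₀, hx₀⟩ h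
          exact hx₀0 (by simpa using congrArg Subtype.val this)
        have hGN : LinearMap.range (U.subtype.comp ψ + U'.subtype) ≤ N := by
          rintro v ⟨x, rfl⟩
          rw [hjmval]
          exact Submodule.add_mem N (hUN (ψ x).2) (hU'N x.2)
        obtain ⟨G₀, hG₀G, hG₀inv, hG₀0, hG₀min⟩ :=
          exists_minimal φ (finrank ℂ ↥(LinearMap.range (U.subtype.comp ψ + U'.subtype)))
            (LinearMap.range (U.subtype.comp ψ + U'.subtype)) le_rfl hGinv hG0
        have hG₀iso := hiso G₀ (hG₀G.trans hGN) hG₀inv hG₀0 hG₀min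
        have hAU' : Submodule.map U'.subtype
            (Submodule.comap (U.subtype.comp ψ + U'.subtype) G₀) ≤ U' :=
          Submodule.map_subtype_le _ _
        have hAinv : ∀ w : W, ∀ v ∈ Submodule.map U'.subtype
            (Submodule.comap (U.subtype.comp ψ + U'.subtype) G₀),
            φ w v ∈ Submodule.map U'.subtype
              (Submodule.comap (U.subtype.comp ψ + U'.subtype) G₀) := by
          rintro w v ⟨y, hy, rfl⟩
          refine ⟨⟨φ w (y : V), hU'inv w _ y.2⟩, ?_, rfl⟩
          have heq : (U.subtype.comp ψ + U'.subtype) ⟨φ w (y : V), hU'inv w _ y.2⟩ =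
              φ w ((U.subtype.comp ψ + U'.subtype) y) := by
            rw [hjmval, hjmval, hψequiv w y, map_add]
          simp only [SetLike.mem_coe, Submodule.mem_comap] at hy ⊢
          rw [heq]
          exact hG₀inv w _ hy
        have hA0 : Submodule.map U'.subtype
            (Submodule.comap (U.subtype.comp ψ + U'.subtype) G₀) ≠ ⊥ := by
          obtain ⟨g, hgG₀, hg0⟩ := (Submodule.ne_bot_iff G₀).mp hG₀0
          obtain ⟨x, rfl⟩ := hG₀G hgG₀
          refine (Submodule.ne_bot_iff _).mpr ⟨(x : V), ⟨x, hgG₀, rfl⟩, ?_⟩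
          intro h
          apply hg0
          have hx0 : x = 0 := Subtype.ext h
          rw [hx0, map_zero]
        have hAeq : Submodule.map U'.subtype
            (Submodule.comap (U.subtype.comp ψ + U'.subtype) G₀) = U' := by
          rcases hU'min _ hAU' hAinv with h | h
          · exact absurd h hA0
          · exact h
        have hjmG₀ : ∀ x : U', (U.subtype.comp ψ + U'.subtype) x ∈ G₀ := by
          intro x
          have hx : (x : V) ∈ Submodule.map U'.subtype
              (Submodule.comap (U.subtype.comp ψ + U'.subtype) G₀) := by
            rw [hAeq]; exact x.2
          obtain ⟨y, hy, hyx⟩ := hx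
          have hxy : y = x := Subtype.ext hyx
          rw [← hxy]
          exact hy
        have hzero : ∀ a b : U', B' (ψ a : V) (ψ b : V) = 0 := by
          intro a b
          have h0 := hG₀iso _ (hjmG₀ a) _ (hjmG₀ b)
          rw [hjmval, hjmval] at h0
          have e1 : B (ψ a : V) (ψ b : V) = 0 := hU00 _ (ψ a).2 _ (ψ b).2
          have e2 : B (a : V) (b : V) = 0 := hU'00 _ a.2 _ b.2
          have e3 : B (ψ a : V) (b : V) = B' (ψ a : V) (ψ b : V) := hψ b (ψ a)
          have e4 : B (a : V) (ψ b : V) = B' (ψ a : V) (ψ b : V) := by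
            rw [bskew B halt, hψ a (ψ b), hB'skew _ (ψ b).2 _ (ψ a).2, neg_neg]
          have hexp : B ((ψ a : V) + a) ((ψ b : V) + b) =
              2 * B' (ψ a : V) (ψ b : V) := by
            simp only [map_add, LinearMap.add_apply]
            rw [e1, e2, e3, e4]; ring
          have h2 : 2 * B' (ψ a : V) (ψ b : V) = 0 := hexp.symm.trans h0
          rcases mul_eq_zero.mp h2 with h | h
          · norm_num at h
          · exact h
        obtain ⟨y₀, hy₀U, hy₀0⟩ := (Submodule.ne_bot_iff U).mp hU0
        apply hy₀0
        apply hB'nd y₀ hy₀U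
        intro u hu
        obtain ⟨aa, ha⟩ := hψsurj ⟨y₀, hy₀U⟩
        obtain ⟨b, hb⟩ := hψsurj ⟨u, hu⟩
        have hz := hzero aa b
        rw [ha, hb] at hz
        exact hz
      have hiotaU : ∀ hq : (∀ w : W, ∀ v ∈ U, φ w v ∈ U),
          ∃ ι : Module.Dual ℂ U →ₗ[ℂ] V, Function.Injective ι ∧
            LinearMap.range ι = U' ∧
            ∀ (w : W) (f : Module.Dual ℂ U),
              φ w (ι f) = ι ((η w : ℂ) •
                (f ∘ₗ (φ w⁻¹).restrict (fun v hv => hq w⁻¹ v hv))) := by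
        intro hq
        have hfr : finrank ℂ U' = finrank ℂ (Module.Dual ℂ U) := by
          rw [Subspace.dual_finrank_eq]; omega
        have hinj := pairMap_inj hRK
        have hbij : Function.Bijective (pairMap B U U') :=
          ⟨hinj, (LinearMap.injective_iff_surjective_of_finrank_eq_finrank hfr).mp hinj⟩
        obtain ⟨e, he⟩ : ∃ e : Module.Dual ℂ U ≃ₗ[ℂ] U',
            ∀ (f : Module.Dual ℂ U) (u : U), B u (e f) = f u := by
          refine ⟨(LinearEquiv.ofBijective (pairMap B U U') hbij).symm, fun f u => ?_⟩
          have h1 : pairMap B U U' ((LinearEquiv.ofBijective (pairMap B U U') hbij).symm f)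
              = f := (LinearEquiv.ofBijective (pairMap B U U') hbij).apply_symm_apply f
          have h2 := congrFun (congrArg DFunLike.coe h1) u
          exact h2
        refine ⟨U'.subtype ∘ₗ (e : Module.Dual ℂ U →ₗ[ℂ] U'), ?_, ?_, ?_⟩
        · exact (Submodule.injective_subtype U').comp e.injective
        · rw [LinearMap.range_comp, LinearEquiv.range, Submodule.map_top,
            Submodule.range_subtype]
        · intro w f
          have hmem : φ w ((e f : V)) ∈ U' := hU'inv w _ (e f).2
          have hkey : e ((η w : ℂ) • (f ∘ₗ (φ w⁻¹).restrict (fun v hv => hq w⁻¹ v hv)))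
              = ⟨φ w ((e f : V)), hmem⟩ := by
            have hsub : ((e ((η w : ℂ) •
                (f ∘ₗ (φ w⁻¹).restrict (fun v hv => hq w⁻¹ v hv))) : V)
                  - φ w ((e f : V))) = 0 := by
              apply hRK _ (Submodule.sub_mem U'
                (e ((η w : ℂ) • (f ∘ₗ (φ w⁻¹).restrict (fun v hv => hq w⁻¹ v hv)))).2 hmem)
              intro u hu
              rw [map_sub]
              have h1 : B u ((e ((η w : ℂ) •
                  (f ∘ₗ (φ w⁻¹).restrict (fun v hv => hq w⁻¹ v hv))) : V))
                  = ((η w : ℂ) • (f ∘ₗ (φ w⁻¹).restrict (fun v hv => hq w⁻¹ v hv))) ⟨u, hu⟩ :=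
                he _ ⟨u, hu⟩
              have h2 : ((η w : ℂ) •
                  (f ∘ₗ (φ w⁻¹).restrict (fun v hv => hq w⁻¹ v hv))) ⟨u, hu⟩
                  = (η w : ℂ) * f ⟨φ w⁻¹ u, hq w⁻¹ u hu⟩ := rfl
              have h3 : f ⟨φ w⁻¹ u, hq w⁻¹ u hu⟩ = B (φ w⁻¹ u) ((e f : V)) :=
                (he f ⟨φ w⁻¹ u, hq w⁻¹ u hu⟩).symm
              have h4 : B (φ w (φ w⁻¹ u)) (φ w ((e f : V))) =
                  (η w : ℂ) * B (φ w⁻¹ u) ((e f : V)) := hequiv w _ _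
              rw [cancel φ w u] at h4
              rw [h1, h2, h3, ← h4, sub_self]
            exact Subtype.ext (by rw [← sub_eq_zero]; exact hsub)
          have hfin : ((e ((η w : ℂ) •
              (f ∘ₗ (φ w⁻¹).restrict (fun v hv => hq w⁻¹ v hv))) : U') : V)
              = φ w ((e f : V)) := by rw [hkey]
          exact hfin.symm
      obtain ⟨hind', hsup'⟩ :=
        indep_consQR P Q R U U' (perp B (U ⊔ U') N) hind hsup hUU' hMdisj
      have hQ' : ∀ (j : Fin (c + 1)) (w : W),
          ∀ v ∈ (Fin.cons U Q : Fin (c + 1) → Submodule ℂ V) j,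
            φ w v ∈ (Fin.cons U Q : Fin (c + 1) → Submodule ℂ V) j := by
        intro j
        induction j using Fin.cases with
        | zero => exact hUinv
        | succ i => exact hQ i
      refine ⟨a, c + 1, P, Fin.cons U Q, Fin.cons U' R, hind',
        by rw [hsup']; exact hsupMN, hPinv, hP2, hPirr, hPsymp,
        ⟨hQ', ?_, ?_, ?_, ?_⟩⟩
      · intro j
        induction j using Fin.cases with
        | zero => exact ⟨hU0, hUmin⟩
        | succ i => exact hQirr i
      · intro j
        induction j using Fin.cases with
        | zero => exact hnoform
        | succ i => exact hQnof i
      · intro j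
        induction j using Fin.cases with
        | zero => exact hU'inv
        | succ i => exact hRinv i
      · intro j
        induction j using Fin.cases with
        | zero => exact hiotaU (hQ' 0)
        | succ i => exact hRdual i

/-- Let `W` be a group, `η` a character of `W`, and `φ` a semisimple
complex representation of `W` of dimension `2n` all of whose irreducible invariant
subspaces have dimension at most `2`.  If `φ` carries a nondegenerate `η`-twisted
symplectic form, then `V` decomposes as an internal direct sum
`⊕_{i} P i ⊕ ⊕_{j} (Q j ⊕ R j)` of invariant subspaces, where each `P i` is a
`2`-dimensional irreducible carrying a nondegenerate `η`-twisted symplectic form, each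
`Q j` is irreducible carrying no such form, and each `R j` is equivariantly isomorphic to
`(Q j)^∨ ⊗ η`. -/
theorem symplectic_type_decomposition
    {W : Type*} [Group W] {V : Type*} [AddCommGroup V] [Module ℂ V]
    [FiniteDimensional ℂ V] (n : ℕ) (hdim : Module.finrank ℂ V = 2 * n)
    (η : W →* ℂˣ) (φ : Representation ℂ W V)
    (hss : ∀ q : Submodule ℂ V, (∀ w : W, ∀ v ∈ q, φ w v ∈ q) →
      ∃ q' : Submodule ℂ V, (∀ w : W, ∀ v ∈ q', φ w v ∈ q') ∧ IsCompl q q')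
    (hdim2 : ∀ p : Submodule ℂ V, (∀ w : W, ∀ v ∈ p, φ w v ∈ p) → p ≠ ⊥ →
      (∀ q : Submodule ℂ V, q ≤ p → (∀ w : W, ∀ v ∈ q, φ w v ∈ q) → q = ⊥ ∨ q = p) →
      Module.finrank ℂ p ≤ 2)
    (B : V →ₗ[ℂ] V →ₗ[ℂ] ℂ)
    (halt : ∀ v : V, B v v = 0)
    (hnondeg : ∀ v : V, (∀ u : V, B v u = 0) → v = 0)
    (hequiv : ∀ (w : W) (u v : V), B (φ w u) (φ w v) = (η w : ℂ) * B u v) :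
    ∃ (a c : ℕ) (P : Fin a → Submodule ℂ V) (Q R : Fin c → Submodule ℂ V),
      iSupIndep (Sum.elim P (Sum.elim Q R)) ∧
      iSup (Sum.elim P (Sum.elim Q R)) = ⊤ ∧
      (∀ i, ∀ w : W, ∀ v ∈ P i, φ w v ∈ P i) ∧
      (∀ i, Module.finrank ℂ (P i) = 2) ∧
      (∀ i, P i ≠ ⊥ ∧ ∀ q : Submodule ℂ V, q ≤ P i →
        (∀ w : W, ∀ v ∈ q, φ w v ∈ q) → q = ⊥ ∨ q = P i) ∧
      (∀ i, HasTwistedSymplecticFormOn φ η (P i)) ∧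
      ∃ hQ : ∀ (j) (w : W), ∀ v ∈ Q j, φ w v ∈ Q j,
        (∀ j, Q j ≠ ⊥ ∧ ∀ q : Submodule ℂ V, q ≤ Q j →
          (∀ w : W, ∀ v ∈ q, φ w v ∈ q) → q = ⊥ ∨ q = Q j) ∧
        (∀ j, ¬ HasTwistedSymplecticFormOn φ η (Q j)) ∧
        (∀ j, ∀ w : W, ∀ v ∈ R j, φ w v ∈ R j) ∧
        (∀ j, ∃ ι : Module.Dual ℂ (Q j) →ₗ[ℂ] V, Function.Injective ι ∧
          LinearMap.range ι = R j ∧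
          ∀ (w : W) (f : Module.Dual ℂ (Q j)),
            φ w (ι f) = ι ((η w : ℂ) •
              (f ∘ₗ (φ w⁻¹).restrict (fun v hv => hQ j w⁻¹ v hv)))) := by
  have h := main_ind η φ hss hdim2 B halt hequiv (finrank ℂ (⊤ : Submodule ℂ V)) ⊤ le_rfl
    (fun w v _ => Submodule.mem_top)
    (fun v _ hv => hnondeg v (fun u => hv u Submodule.mem_top))
  exact h
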